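/- With u, w, φ as above and v = x·u + y·w, the equation f(v,v) = r² is equivalent to (cos φ)x² + ((1−cos φ)(1+2cos φ)/sin φ)xy − (cos²φ/(1+cos φ))y² = r²/2. -/

import Mathlib

/-- The cyclic permutation of coordinates on ℝ³. -/
noncomputable def Q : (Fin 3 → ℝ) → (Fin 3 → ℝ) :=
  fun u => (!![(0:ℝ),1,0; 0,0,1; 1,0,0]).mulVec u

theorem circle_equation (g : LinearMap.BilinForm ℝ (Fin 3 → ℝ))
    (hsymm : ∀ u v, g u v = g v u)
    (hpos : ∀ u, u ≠ 0 → 0 < g u u)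
    (hinv : ∀ u v, g (Q u) (Q v) = g u v)
    (f : (Fin 3 → ℝ) → (Fin 3 → ℝ) → ℝ)
    (hf : ∀ u v, f u v = g u (Q v) + g (Q u) v)
    (u : Fin 3 → ℝ) (hu : g u u = 1)
    (φ : ℝ) (hφ : φ ∈ Set.Ioo 0 (2 * Real.pi / 3))
    (hcos : g u (Q u) = Real.cos φ)
    (w : Fin 3 → ℝ)
    (hw : w = (1 / Real.sin φ) • (-(Real.cos φ) • u + Q u))
    (x y r : ℝ) (v : Fin 3 → ℝ) (hv : v = x • u + y • w) :
    f v v = r ^ 2 ↔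
    Real.cos φ * x ^ 2 +
      ((1 - Real.cos φ) * (1 + 2 * Real.cos φ) / Real.sin φ) * x * y -
      (Real.cos φ ^ 2 / (1 + Real.cos φ)) * y ^ 2 = r ^ 2 / 2 := by
  set c := Real.cos φ with hc
  set s := Real.sin φ with hsdef
  obtain ⟨hφ0, hφ1⟩ := hφ
  have hπ : (0:ℝ) < Real.pi := Real.pi_pos
  have hs : 0 < s := by
    apply Real.sin_pos_of_pos_of_lt_pi hφ0
    nlinarith
  have hc1 : 0 < 1 + c := by
    have : Real.cos (2 * Real.pi / 3) < c := by
      rw [hc]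
      apply Real.cos_lt_cos_of_nonneg_of_le_pi (le_of_lt hφ0) (by nlinarith) hφ1
    have h23 : Real.cos (2 * Real.pi / 3) = -(1/2) := by
      have : (2 : ℝ) * Real.pi / 3 = Real.pi - Real.pi / 3 := by ring
      rw [this, Real.cos_pi_sub, Real.cos_pi_div_three]
    linarith [h23 ▸ this]
  have hs2 : s ^ 2 = 1 - c ^ 2 := Real.sin_sq φ
  -- Q cubes to identity
  have hQ3 : ∀ p : Fin 3 → ℝ, Q (Q (Q p)) = p := by
    intro p; funext i
    fin_cases i <;>
      simp [Q, Matrix.mulVec, dotProduct, Fin.sum_univ_three, Matrix.vecHead, Matrix.vecTail]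
  -- Q is linear on the combinations we use
  have hQadd : ∀ p q' : Fin 3 → ℝ, Q (p + q') = Q p + Q q' := by
    intro p q'; simp [Q, Matrix.mulVec_add]
  have hQsmul : ∀ (a : ℝ) (p : Fin 3 → ℝ), Q (a • p) = a • Q p := by
    intro a p; simp [Q, Matrix.mulVec_smul]
  -- scalar products of the frame
  have hQuQu : g (Q u) (Q u) = 1 := by rw [hinv, hu]
  have hQuu : g (Q u) u = c := by rw [hsymm, hcos]
  have huQ2 : g u (Q (Q u)) = c := by
    rw [← hinv, hQ3, hsymm, hcos]
  have hQuQ2 : g (Q u) (Q (Q u)) = c := by rw [hinv, hcos]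
  -- expand Q w
  have hQw : Q w = (1 / s) • (-c • Q u + Q (Q u)) := by
    rw [hw, hQsmul, hQadd, hQsmul]
  have h1 : g u (Q w) = c * (1 - c) / s := by
    rw [hQw]
    simp only [map_add, map_smul, smul_eq_mul, hcos, huQ2, neg_smul, map_neg]
    field_simp
    ring
  have h2 : g w (Q u) = (1 - c) * (1 + c) / s := by
    rw [hw]
    simp only [map_add, map_smul, LinearMap.add_apply, LinearMap.smul_apply,
      smul_eq_mul, hQuQu, hcos, neg_smul, map_neg, LinearMap.neg_apply]
    field_simp
    ring
  have h3 : g w (Q w) = -(c ^ 2) / (1 + c) := by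
    rw [hQw, hw]
    simp only [map_add, map_smul, LinearMap.add_apply, LinearMap.smul_apply,
      smul_eq_mul, hQuQu, hcos, huQ2, hQuQ2, neg_smul, map_neg, LinearMap.neg_apply]
    field_simp
    linear_combination c^2 * hs2
  have hfvv : f v v = 2 * (c * x ^ 2 + ((1 - c) * (1 + 2 * c) / s) * x * y -
      (c ^ 2 / (1 + c)) * y ^ 2) := by
    rw [hf, ← hsymm v (Q v)]
    rw [hv, hQadd, hQsmul, hQsmul]
    simp only [map_add, map_smul, LinearMap.add_apply, LinearMap.smul_apply,
      smul_eq_mul, hcos, h1, h2, h3]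
    field_simp
    ring
  rw [hfvv]
  constructor <;> intro h <;> linarith
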